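/- Let T be a tree, u a leaf with neighbor v, T' = T − u, and w any vertex of T with w ≠ u. Then the map sending a subtree of T' containing w either to itself, or (if it contains v) additionally to its extension by the edge (u,v), gives a bijection showing η_{≤k}(T; w) = η_{≤k}(T'; w) + #{subtrees S' of T' containing both w and v with max degree ≤ k and deg_{S'}(v) ≤ k−1}. -/

import Mathlib

open SimpleGraph

/-- The degree of `v` within the vertex set `s` of the induced subgraph of `G`. -/
noncomputable def degIn {V : Type*} (G : SimpleGraph V) (s : Set V) (v : V) : ℕ :=
  {w ∈ s | G.Adj v w}.ncard

/-- `s` induces a (nonempty, connected) subtree of `G`. -/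
def IsSubtree {V : Type*} (G : SimpleGraph V) (s : Set V) : Prop :=
  s.Nonempty ∧ (G.induce s).Connected

/-- All vertex degrees within the subtree on `s` are at most `k`. -/
def MaxDegLE {V : Type*} (G : SimpleGraph V) (s : Set V) (k : ℕ) : Prop :=
  ∀ v ∈ s, degIn G s v ≤ k

/-- A BC-subtree: a subtree with at least two vertices in which any two
leaves are at even distance. -/
def IsBCSubtree {V : Type*} (G : SimpleGraph V) (s : Set V) : Prop :=
  IsSubtree G s ∧ 2 ≤ s.ncard ∧
    ∀ l₁ l₂ : s, degIn G s (l₁ : V) = 1 → degIn G s (l₂ : V) = 1 →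
      Even ((G.induce s).dist l₁ l₂)

/-- The star `K_{1,n}`: center `none`, leaves `some i`. -/
def starGraph (n : ℕ) : SimpleGraph (Option (Fin n)) :=
  SimpleGraph.fromRel (fun a _ => a = none)

section Aux

variable {V : Type*} {G : SimpleGraph V} {u v : V}

/-- Splitting a subtype by an extra predicate. -/
def splitEquiv {α : Type*} (P Q : α → Prop) [∀ a, Decidable (Q a)] :
    {a // P a} ≃ {a // P a ∧ Q a} ⊕ {a // P a ∧ ¬ Q a} where
  toFun a := if h : Q a.1 then .inl ⟨a.1, a.2, h⟩ else .inr ⟨a.1, a.2, h⟩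
  invFun x := x.elim (fun a => ⟨a.1, a.2.1⟩) (fun a => ⟨a.1, a.2.1⟩)
  left_inv a := by by_cases h : Q a.1 <;> simp [h]
  right_inv x := by
    rcases x with a | a
    · simp [a.2.2]
    · simp [a.2.2]

/-- A path not starting or ending at the leaf `u` avoids `u`. -/
lemma leaf_not_mem_path (hleaf : ∀ w', G.Adj u w' → w' = v)
    {a b : V} (p : G.Walk a b) (hp : p.IsPath) (ha : a ≠ u) (hb : b ≠ u) :
    u ∉ p.support := by
  induction p with
  | nil => simp [Ne.symm ha]
  | @cons a c b h q ih =>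
    rw [SimpleGraph.Walk.support_cons]
    intro hmem
    rcases List.mem_cons.1 hmem with rfl | hmem
    · exact ha rfl
    · rw [SimpleGraph.Walk.cons_isPath_iff] at hp
      by_cases hc : c = u
      · subst hc
        have hav : a = v := hleaf a h.symm
        have hnq : ¬ q.Nil := SimpleGraph.Walk.not_nil_of_ne (Ne.symm hb)
        have hadj : G.Adj c (q.getVert 1) := q.adj_snd hnq
        have h1 : q.getVert 1 = v := hleaf _ hadj
        have hlen : q.length ≠ 0 := fun hl => hnq (SimpleGraph.Walk.nil_iff_length_eq.2 hl)
        have hmem1 : q.getVert 1 ∈ q.support :=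
          SimpleGraph.Walk.mem_support_iff_exists_getVert.2 ⟨1, rfl, by omega⟩
        rw [h1, ← hav] at hmem1
        exact hp.2 hmem1
      · exact ih hp.1 hc hb hmem

/-- The inclusion homomorphism from an induced subgraph. -/
def induceHomToTop (s : Set V) : G.induce s →g G := ⟨Subtype.val, fun h => h⟩

lemma induce_diff_connected (hleaf : ∀ w', G.Adj u w' → w' = v)
    {s : Set V} (hs : (G.induce s).Connected) {w : V} (hws : w ∈ s) (hwu : w ≠ u) :
    (G.induce (s \ {u})).Connected := by
  classical
  have hwd : w ∈ s \ {u} := ⟨hws, by simpa using hwu⟩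
  apply G.induce_connected_of_patches w hwd
  intro x hx
  obtain ⟨p0⟩ := hs ⟨w, hws⟩ ⟨x, hx.1⟩
  set q := (p0.map (induceHomToTop s)).bypass with hq
  have hqs : ∀ y ∈ q.support, y ∈ s := by
    intro y hy
    have h1 := (p0.map (induceHomToTop s)).support_bypass_subset hy
    rw [SimpleGraph.Walk.support_map] at h1
    obtain ⟨z, _, rfl⟩ := List.mem_map.1 h1
    exact z.2
  have hus : u ∉ q.support :=
    leaf_not_mem_path hleaf q ((p0.map (induceHomToTop s)).bypass_isPath) hwu hx.2
  refine ⟨{y | y ∈ q.support}, fun y hy => ⟨hqs y hy, ?_⟩, q.start_mem_support,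
    q.end_mem_support, (q.connected_induce_support).preconnected _ _⟩
  intro h
  rw [Set.mem_singleton_iff] at h
  exact hus (h ▸ hy)

lemma v_mem_of_u_mem (hleaf : ∀ w', G.Adj u w' → w' = v)
    {s : Set V} (hs : (G.induce s).Connected) (hus : u ∈ s) {w : V} (hws : w ∈ s)
    (hwu : w ≠ u) : v ∈ s := by
  obtain ⟨p⟩ := hs ⟨u, hus⟩ ⟨w, hws⟩
  have hnp : ¬ p.Nil := SimpleGraph.Walk.not_nil_of_ne (by
    intro h
    exact hwu (congrArg Subtype.val h).symm)
  have hadj : G.Adj u (↑(p.getVert 1)) := p.adj_snd hnp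
  have := hleaf _ hadj
  rw [← this]
  exact (p.getVert 1).2

lemma degIn_insert_of_ne (huv : G.Adj u v) (hleaf : ∀ w', G.Adj u w' → w' = v)
    {s' : Set V} {x : V} (hxu : x ≠ u) (hxv : x ≠ v) :
    degIn G (insert u s') x = degIn G s' x := by
  unfold degIn
  congr 1
  ext y
  simp only [Set.mem_setOf_eq, Set.mem_insert_iff]
  constructor
  · rintro ⟨rfl | hy, hadj⟩
    · exact absurd (hleaf x hadj.symm) hxv
    · exact ⟨hy, hadj⟩
  · rintro ⟨hy, hadj⟩
    exact ⟨Or.inr hy, hadj⟩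

lemma degIn_insert_v [Fintype V] (huv : G.Adj u v) {s' : Set V} (hus : u ∉ s')
    (hvs : v ∈ s') : degIn G (insert u s') v = degIn G s' v + 1 := by
  unfold degIn
  have h1 : {y ∈ insert u s' | G.Adj v y} = insert u {y ∈ s' | G.Adj v y} := by
    ext y
    simp only [Set.mem_setOf_eq, Set.mem_insert_iff]
    constructor
    · rintro ⟨rfl | hy, hadj⟩
      · exact Or.inl rfl
      · exact Or.inr ⟨hy, hadj⟩
    · rintro (rfl | ⟨hy, hadj⟩)
      · exact ⟨Or.inl rfl, huv.symm⟩
      · exact ⟨Or.inr hy, hadj⟩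
  rw [h1, Set.ncard_insert_of_notMem (fun h => hus h.1) (Set.toFinite _)]

lemma degIn_insert_u (huv : G.Adj u v) (hleaf : ∀ w', G.Adj u w' → w' = v)
    {s' : Set V} (hvs : v ∈ s') : degIn G (insert u s') u = 1 := by
  unfold degIn
  have h1 : {y ∈ insert u s' | G.Adj u y} = {v} := by
    ext y
    simp only [Set.mem_setOf_eq, Set.mem_insert_iff, Set.mem_singleton_iff]
    constructor
    · rintro ⟨_, hadj⟩
      exact hleaf _ hadj
    · rintro rfl
      exact ⟨Or.inr hvs, huv⟩
  rw [h1, Set.ncard_singleton]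

lemma induce_singleton_connected (u : V) : (G.induce ({u} : Set V)).Connected := by
  haveI : Nonempty ({u} : Set V) := ⟨⟨u, rfl⟩⟩
  constructor
  intro a b
  have ha : (a : V) = u := a.2
  have hb : (b : V) = u := b.2
  have hab : a = b := Subtype.ext (ha.trans hb.symm)
  exact hab ▸ SimpleGraph.Reachable.refl a


variable [Fintype V]

lemma forward_dir (huv : G.Adj u v) (hleaf : ∀ w', G.Adj u w' → w' = v)
    {s : Set V} {w : V} {k : ℕ} (hws : w ∈ s) (hwu : w ≠ u)
    (hsub : IsSubtree G s) (hdeg : MaxDegLE G s k) (hus : u ∈ s) :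
    u ∉ s \ {u} ∧ w ∈ s \ {u} ∧ v ∈ s \ {u} ∧ IsSubtree G (s \ {u}) ∧
      MaxDegLE G (s \ {u}) k ∧ degIn G (s \ {u}) v ≤ k - 1 := by
  obtain ⟨hne, hconn⟩ := hsub
  have hvu : v ≠ u := huv.ne'
  have hvs : v ∈ s := v_mem_of_u_mem hleaf hconn hus hws hwu
  have hins : insert u (s \ {u}) = s := by
    rw [Set.insert_diff_singleton]
    exact Set.insert_eq_self.2 hus
  have hwd : w ∈ s \ {u} := ⟨hws, by simpa using hwu⟩
  have hvd : v ∈ s \ {u} := ⟨hvs, by simpa using hvu⟩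
  have hud : u ∉ s \ {u} := fun h => h.2 rfl
  have hdv : degIn G (s \ {u}) v + 1 = degIn G s v := by
    conv_rhs => rw [← hins]
    rw [degIn_insert_v huv hud hvd]
  have hdegv : degIn G (s \ {u}) v ≤ k - 1 := by
    have := hdeg v hvs
    omega
  refine ⟨hud, hwd, hvd, ⟨⟨w, hwd⟩, induce_diff_connected hleaf hconn hws hwu⟩, ?_, hdegv⟩
  intro x hx
  have hxu : x ≠ u := fun h => hx.2 (by simpa using h)
  by_cases hxv : x = v
  · subst hxv
    have := hdeg x hx.1
    omega
  · have heq : degIn G (s \ {u}) x = degIn G s x := by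
      conv_rhs => rw [← hins]
      rw [degIn_insert_of_ne huv hleaf hxu hxv]
    rw [heq]
    exact hdeg x hx.1

lemma backward_dir (huv : G.Adj u v) (hleaf : ∀ w', G.Adj u w' → w' = v)
    {s' : Set V} {w : V} {k : ℕ} (hk : 1 ≤ k)
    (hus : u ∉ s') (hws : w ∈ s') (hvs : v ∈ s')
    (hsub : IsSubtree G s') (hdeg : MaxDegLE G s' k) (hdv : degIn G s' v ≤ k - 1) :
    w ∈ insert u s' ∧ IsSubtree G (insert u s') ∧ MaxDegLE G (insert u s') k := by
  obtain ⟨hne, hconn⟩ := hsub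
  have hconn' : (G.induce (insert u s')).Connected := by
    rw [← Set.union_singleton]
    exact G.connected_induce_union hconn.preconnected (induce_singleton_connected u).preconnected hvs rfl huv.symm
  refine ⟨Set.mem_insert_of_mem _ hws, ⟨⟨w, Set.mem_insert_of_mem _ hws⟩, hconn'⟩, ?_⟩
  intro x hx
  rcases Set.mem_insert_iff.1 hx with rfl | hx'
  · rw [degIn_insert_u huv hleaf hvs]
    exact hk
  · have hxu : x ≠ u := fun h => hus (h ▸ hx')
    by_cases hxv : x = v
    · subst hxv
      rw [degIn_insert_v huv hus hvs]
      omega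
    · rw [degIn_insert_of_ne huv hleaf hxu hxv]
      exact hdeg x hx'

end Aux

theorem stmt6 {V : Type*} [Fintype V] (G : SimpleGraph V) (hG : G.IsTree) (u v : V)
    (huv : G.Adj u v) (hleaf : ∀ w', G.Adj u w' → w' = v) (w : V) (hw : w ≠ u)
    (k : ℕ) (hk : 1 ≤ k) :
    Nat.card {s : Set V // w ∈ s ∧ IsSubtree G s ∧ MaxDegLE G s k}
      = Nat.card {s : Set V // u ∉ s ∧ w ∈ s ∧ IsSubtree G s ∧ MaxDegLE G s k}
        + Nat.card {s : Set V // u ∉ s ∧ w ∈ s ∧ v ∈ s ∧ IsSubtree G s ∧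
            MaxDegLE G s k ∧ degIn G s v ≤ k - 1} := by
  classical
  rw [Nat.card_congr
    (splitEquiv (fun s => w ∈ s ∧ IsSubtree G s ∧ MaxDegLE G s k) (fun s => u ∉ s)),
    Nat.card_sum]
  congr 1
  · exact Nat.card_congr (Equiv.subtypeEquivRight (fun s => by tauto))
  · refine Nat.card_congr ⟨fun a => ⟨a.1 \ {u},
      forward_dir huv hleaf a.2.1.1 hw a.2.1.2.1 a.2.1.2.2 (not_not.1 a.2.2)⟩,
      fun b => ⟨insert u b.1,
        backward_dir huv hleaf hk b.2.1 b.2.2.1 b.2.2.2.1 b.2.2.2.2.1 b.2.2.2.2.2.1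
          b.2.2.2.2.2.2, not_not.2 (Set.mem_insert _ _)⟩, ?_, ?_⟩
    · rintro ⟨s, hs, hus⟩
      apply Subtype.ext
      simp only
      rw [Set.insert_diff_singleton]
      exact Set.insert_eq_self.2 (not_not.1 hus)
    · rintro ⟨s', hus, _⟩
      apply Subtype.ext
      simp only
      exact Set.insert_diff_self_of_notMem hus
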